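/- arXiv:1503.00871 — 5 statements merged into one kernel-verified Lean document; each statement's English description precedes it below -/
import Mathlib

section
/- In the commutative ring R, the determinant of the 4×4 matrix M equals ((A₁+𝛌)(A₃+𝛌) − (λ₁²−λ₂²))·((A₂+𝛌)(A₄+𝛌) − (λ₁²−λ₂²)) − 4λ₂²(T+𝛌)². -/
/-- The determinant of the 4×4 operator matrix `M = 𝔇₂ + Λ₂` of the Kolmogorov system for the
sum and difference of two independent telegraph processes equals
`((A₁+𝛌)(A₃+𝛌) − (λ₁²−λ₂²))·((A₂+𝛌)(A₄+𝛌) − (λ₁²−λ₂²)) − 4λ₂²(T+𝛌)²`.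
Here `l₁, l₂` play the roles of the Poisson rates `λ₁, λ₂`. -/
theorem stmt_4 {R : Type*} [CommRing R] (T X c₁ c₂ l₁ l₂ : R) :
    let lam := l₁ + l₂
    let A₁ := T - (c₁ + c₂) * X
    let A₂ := T - (c₁ - c₂) * X
    let A₃ := T + (c₁ - c₂) * X
    let A₄ := T + (c₁ + c₂) * X
    let M : Matrix (Fin 4) (Fin 4) R :=
      !![A₁ + lam, -l₂,      -l₁,      0;
         -l₂,      A₂ + lam, 0,        -l₁;
         -l₁,      0,        A₃ + lam, -l₂;
         0,        -l₁,      -l₂,      A₄ + lam]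
    M.det = ((A₁ + lam) * (A₃ + lam) - (l₁ ^ 2 - l₂ ^ 2)) *
              ((A₂ + lam) * (A₄ + lam) - (l₁ ^ 2 - l₂ ^ 2)) -
            4 * l₂ ^ 2 * (T + lam) ^ 2 := by
  simp [Matrix.det_succ_row_zero, Fin.sum_univ_succ, Fin.succAbove]
  ring
end

section
/- In the commutative ring R, the determinant of the 4×4 matrix M equals (T+𝛌)²·(T² + 2𝛌T − 2(c₁²+c₂²)X² − (λ₁−λ₂)²) + ((c₁²−c₂²)X² + (λ₁²−λ₂²))². (This is the governing operator of order 4 for the transition probability densities of the sum and difference of two independent telegraph processes with arbitrary parameters.) -/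
/-- The determinant of the 4×4 operator matrix `M = 𝔇₂ + Λ₂` equals the governing operator of
order 4 for the transition densities of the sum and difference of two independent telegraph
processes:
`(T+𝛌)²(T² + 2𝛌T − 2(c₁²+c₂²)X² − (λ₁−λ₂)²) + ((c₁²−c₂²)X² + (λ₁²−λ₂²))²`.
Here `l₁, l₂` play the roles of the Poisson rates `λ₁, λ₂`. -/
theorem stmt_5 {R : Type*} [CommRing R] (T X c₁ c₂ l₁ l₂ : R) :
    let lam := l₁ + l₂
    let A₁ := T - (c₁ + c₂) * X
    let A₂ := T - (c₁ - c₂) * X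
    let A₃ := T + (c₁ - c₂) * X
    let A₄ := T + (c₁ + c₂) * X
    let M : Matrix (Fin 4) (Fin 4) R :=
      !![A₁ + lam, -l₂,      -l₁,      0;
         -l₂,      A₂ + lam, 0,        -l₁;
         -l₁,      0,        A₃ + lam, -l₂;
         0,        -l₁,      -l₂,      A₄ + lam]
    M.det = (T + lam) ^ 2 *
              (T ^ 2 + 2 * lam * T - 2 * (c₁ ^ 2 + c₂ ^ 2) * X ^ 2 - (l₁ - l₂) ^ 2) +
            ((c₁ ^ 2 - c₂ ^ 2) * X ^ 2 + (l₁ ^ 2 - l₂ ^ 2)) ^ 2 := by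
  intro lam A₁ A₂ A₃ A₄ M
  show M.det = _
  rw [show M.det = _ from Matrix.det_succ_row_zero M]
  simp [Fin.sum_univ_succ, Matrix.det_succ_row_zero, Fin.sum_univ_succ, M, A₁, A₂, A₃, A₄, lam,
    Matrix.submatrix, Matrix.det_fin_one, Fin.succAbove]
  ring
end

section
/- Let (λₘ), (cₘ) be sequences of positive reals satisfying Kac's scaling condition with constant ϱ > 0, let β ∈ ℝ be fixed and let t > 0. Then exp(−λₘt)·cosh(t√(λₘ² − cₘ²β²)) → (1/2)·exp(−ϱβ²t/2) and exp(−λₘt)·(λₘ/√(λₘ² − cₘ²β²))·sinh(t√(λₘ² − cₘ²β²)) → (1/2)·exp(−ϱβ²t/2) as m → ∞. -/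
open Filter

/-- Under Kac's scaling condition (`λₘ → +∞`, `cₘ → +∞`, `cₘ²/λₘ → ϱ > 0`) for sequences of
positive reals, for fixed `β ∈ ℝ` and `t > 0`:
`exp(−λₘt)·cosh(t√(λₘ² − cₘ²β²)) → (1/2)·exp(−ϱβ²t/2)` and
`exp(−λₘt)·(λₘ/√(λₘ² − cₘ²β²))·sinh(t√(λₘ² − cₘ²β²)) → (1/2)·exp(−ϱβ²t/2)`. -/
theorem stmt_15 (lam c : ℕ → ℝ) (ϱ : ℝ) (hϱ : 0 < ϱ)
    (hlam_pos : ∀ m, 0 < lam m) (hc_pos : ∀ m, 0 < c m)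
    (hlam : Tendsto lam atTop atTop) (hc : Tendsto c atTop atTop)
    (hKac : Tendsto (fun m => (c m) ^ 2 / lam m) atTop (nhds ϱ))
    (β t : ℝ) (ht : 0 < t) :
    Tendsto (fun m => Real.exp (-(lam m) * t) *
        Real.cosh (t * Real.sqrt ((lam m) ^ 2 - (c m) ^ 2 * β ^ 2))) atTop
      (nhds ((1 / 2) * Real.exp (-(ϱ * β ^ 2 * t / 2)))) ∧
    Tendsto (fun m => Real.exp (-(lam m) * t) *
        (lam m / Real.sqrt ((lam m) ^ 2 - (c m) ^ 2 * β ^ 2)) *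
        Real.sinh (t * Real.sqrt ((lam m) ^ 2 - (c m) ^ 2 * β ^ 2))) atTop
      (nhds ((1 / 2) * Real.exp (-(ϱ * β ^ 2 * t / 2)))) := by
  set s : ℕ → ℝ := fun m => Real.sqrt ((lam m) ^ 2 - (c m) ^ 2 * β ^ 2) with hsdef
  -- ratio → 0
  have hratio : Tendsto (fun m => (c m) ^ 2 * β ^ 2 / (lam m) ^ 2) atTop (nhds 0) := by
    have h1 : Tendsto (fun m => ((c m) ^ 2 / lam m) * β ^ 2 * (lam m)⁻¹) atTop (nhds 0) := by
      have := (hKac.mul_const (β ^ 2)).mul hlam.inv_tendsto_atTop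
      simpa using this
    refine h1.congr fun m => ?_
    have := (hlam_pos m).ne'
    field_simp
  have hpos : ∀ᶠ m in atTop, 0 < (lam m) ^ 2 - (c m) ^ 2 * β ^ 2 := by
    have h1 : ∀ᶠ m in atTop, (c m) ^ 2 * β ^ 2 / (lam m) ^ 2 < 1 :=
      hratio.eventually (eventually_lt_nhds one_pos)
    filter_upwards [h1] with m hm
    have h2 : (0:ℝ) < (lam m) ^ 2 := pow_pos (hlam_pos m) 2
    have := (div_lt_one h2).mp hm
    linarith
  -- s/λ → 1
  have hsl : Tendsto (fun m => s m / lam m) atTop (nhds 1) := by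
    have h1 : Tendsto (fun m => Real.sqrt (1 - (c m) ^ 2 * β ^ 2 / (lam m) ^ 2)) atTop
        (nhds 1) := by
      have h0 : Tendsto (fun m => (1:ℝ) - (c m) ^ 2 * β ^ 2 / (lam m) ^ 2) atTop
          (nhds (1 - 0)) := tendsto_const_nhds.sub hratio
      simpa using h0.sqrt
    refine h1.congr' ?_
    filter_upwards [hpos] with m hm
    have hl := hlam_pos m
    have h2 : 1 - (c m) ^ 2 * β ^ 2 / (lam m) ^ 2
        = ((lam m) ^ 2 - (c m) ^ 2 * β ^ 2) / (lam m) ^ 2 := by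
      field_simp
    rw [h2, Real.sqrt_div hm.le, Real.sqrt_sq hl.le]
  -- λ − s → ϱβ²/2
  have hdiff : Tendsto (fun m => lam m - s m) atTop (nhds (ϱ * β ^ 2 / 2)) := by
    have h1 : Tendsto (fun m => ((c m) ^ 2 / lam m) * β ^ 2 / (1 + s m / lam m)) atTop
        (nhds (ϱ * β ^ 2 / (1 + 1))) :=
      (hKac.mul_const (β ^ 2)).div (tendsto_const_nhds.add hsl) (by norm_num)
    rw [show ϱ * β ^ 2 / 2 = ϱ * β ^ 2 / (1 + 1) by norm_num]
    refine Tendsto.congr' ?_ h1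
    filter_upwards [hpos] with m hm
    have hl := hlam_pos m
    have hs0 : 0 < s m := Real.sqrt_pos.mpr hm
    have hsq : s m ^ 2 = (lam m) ^ 2 - (c m) ^ 2 * β ^ 2 := Real.sq_sqrt hm.le
    have hden : 1 + s m / lam m ≠ 0 := by positivity
    field_simp
    nlinarith [hsq]
  -- λ + s → ∞
  have hsum : Tendsto (fun m => lam m + s m) atTop atTop :=
    tendsto_atTop_mono (fun m => le_add_of_nonneg_right (Real.sqrt_nonneg _)) hlam
  -- exp limits
  have e1 : Tendsto (fun m => Real.exp (-(lam m - s m) * t)) atTop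
      (nhds (Real.exp (-(ϱ * β ^ 2 * t / 2)))) := by
    rw [show -(ϱ * β ^ 2 * t / 2) = -(ϱ * β ^ 2 / 2) * t by ring]
    exact (Real.continuous_exp.tendsto _).comp (hdiff.neg.mul_const t)
  have e2 : Tendsto (fun m => Real.exp (-(lam m + s m) * t)) atTop (nhds 0) := by
    have h1 : Tendsto (fun m => -(lam m + s m) * t) atTop atBot := by
      have := hsum.atTop_mul_const ht
      refine (tendsto_neg_atTop_atBot.comp this).congr fun m => ?_
      simp only [Function.comp_apply]
      ring
    exact Real.tendsto_exp_atBot.comp h1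
  have hls : Tendsto (fun m => lam m / s m) atTop (nhds 1) := by
    have := hsl.inv₀ one_ne_zero
    simpa [inv_div] using this
  constructor
  · have h := (e1.add e2).div_const 2
    rw [show (1 / 2 : ℝ) * Real.exp (-(ϱ * β ^ 2 * t / 2))
        = (Real.exp (-(ϱ * β ^ 2 * t / 2)) + 0) / 2 by ring]
    refine h.congr fun m => ?_
    rw [Real.cosh_eq, show -(lam m - s m) * t = -(lam m) * t + t * s m by ring,
      show -(lam m + s m) * t = -(lam m) * t + -(t * s m) by ring,
      Real.exp_add, Real.exp_add]
    ring
  · have h := hls.mul ((e1.sub e2).div_const 2)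
    rw [show (1 / 2 : ℝ) * Real.exp (-(ϱ * β ^ 2 * t / 2))
        = 1 * ((Real.exp (-(ϱ * β ^ 2 * t / 2)) - 0) / 2) by ring]
    refine h.congr fun m => ?_
    rw [Real.sinh_eq, show -(lam m - s m) * t = -(lam m) * t + t * s m by ring,
      show -(lam m + s m) * t = -(lam m) * t + -(t * s m) by ring,
      Real.exp_add, Real.exp_add]
    ring
end

section
/- Let (λₘ), (cₘ) be sequences of positive reals satisfying Kac's scaling condition with constant ϱ > 0, let β ∈ ℝ be fixed and let t ≥ 0. Then exp(−λₘt)·H̃(λₘ, cₘ, β, t) → exp(−ϱβ²t/2) as m → ∞. (This is the Kac diffusion limit of the characteristic function of a single Goldstein–Kac telegraph process: it converges to the characteristic function of Brownian motion with diffusion coefficient ϱ.) -/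
open Filter

/-- `H̃(λ,c,ξ,t)`: for `|ξ| < λ/c` the hyperbolic branch
`cosh(t√(λ²−c²ξ²)) + (λ/√(λ²−c²ξ²))·sinh(t√(λ²−c²ξ²))`, otherwise the trigonometric branch
`cos(t√(c²ξ²−λ²)) + (λ/√(c²ξ²−λ²))·sin(t√(c²ξ²−λ²))`; `exp(−λt)·H̃(λ,c,ξ,t)` is the
characteristic function of the Goldstein–Kac telegraph process. -/
noncomputable def Htilde (l c ξ t : ℝ) : ℝ :=
  if |ξ| < l / c then
    Real.cosh (t * Real.sqrt (l ^ 2 - c ^ 2 * ξ ^ 2)) +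
      l / Real.sqrt (l ^ 2 - c ^ 2 * ξ ^ 2) *
        Real.sinh (t * Real.sqrt (l ^ 2 - c ^ 2 * ξ ^ 2))
  else
    Real.cos (t * Real.sqrt (c ^ 2 * ξ ^ 2 - l ^ 2)) +
      l / Real.sqrt (c ^ 2 * ξ ^ 2 - l ^ 2) *
        Real.sin (t * Real.sqrt (c ^ 2 * ξ ^ 2 - l ^ 2))

/-- Kac's diffusion limit of the characteristic function of a single Goldstein–Kac telegraph
process: under Kac's scaling (`λₘ → +∞`, `cₘ → +∞`, `cₘ²/λₘ → ϱ > 0`), for fixed `β ∈ ℝ`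
and `t ≥ 0`, `exp(−λₘt)·H̃(λₘ, cₘ, β, t) → exp(−ϱβ²t/2)`, the characteristic function of
Brownian motion with diffusion coefficient `ϱ`. -/
theorem stmt_16 (lam c : ℕ → ℝ) (ϱ : ℝ) (hϱ : 0 < ϱ)
    (hlam_pos : ∀ m, 0 < lam m) (hc_pos : ∀ m, 0 < c m)
    (hlam : Tendsto lam atTop atTop) (hc : Tendsto c atTop atTop)
    (hKac : Tendsto (fun m => (c m) ^ 2 / lam m) atTop (nhds ϱ))
    (β t : ℝ) (ht : 0 ≤ t) :
    Tendsto (fun m => Real.exp (-(lam m) * t) * Htilde (lam m) (c m) β t) atTop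
      (nhds (Real.exp (-(ϱ * β ^ 2 * t / 2)))) := by
  have hlne : ∀ m, lam m ≠ 0 := fun m => (hlam_pos m).ne'
  -- c²β²/λ² → 0
  have h0 : Tendsto (fun m => (c m) ^ 2 * β ^ 2 / (lam m) ^ 2) atTop (nhds 0) := by
    have h1 : Tendsto (fun m => (c m) ^ 2 / lam m * (β ^ 2 * (lam m)⁻¹)) atTop
        (nhds (ϱ * (β ^ 2 * 0))) :=
      hKac.mul (tendsto_const_nhds.mul hlam.inv_tendsto_atTop)
    rw [mul_zero, mul_zero] at h1
    refine h1.congr fun m => ?_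
    field_simp
  set a : ℕ → ℝ := fun m => Real.sqrt ((lam m) ^ 2 - (c m) ^ 2 * β ^ 2) with ha
  have hE : ∀ᶠ m in atTop, (c m) ^ 2 * β ^ 2 < (lam m) ^ 2 := by
    filter_upwards [h0.eventually_lt_const one_pos] with m hm
    have hl2 : (0:ℝ) < (lam m) ^ 2 := pow_pos (hlam_pos m) 2
    exact (div_lt_one hl2).mp hm
  have hr : Tendsto (fun m => a m / lam m) atTop (nhds 1) := by
    have hc1 : Tendsto (fun m => Real.sqrt (1 - (c m) ^ 2 * β ^ 2 / (lam m) ^ 2)) atTop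
        (nhds 1) := by
      have hbase : Tendsto (fun m => 1 - (c m) ^ 2 * β ^ 2 / (lam m) ^ 2) atTop
          (nhds ((1:ℝ) - 0)) := tendsto_const_nhds.sub h0
      rw [sub_zero] at hbase
      have := (Real.continuous_sqrt.tendsto 1).comp hbase
      rw [Real.sqrt_one] at this
      exact this
    refine hc1.congr' ?_
    filter_upwards [hE] with m hm
    have hl := hlam_pos m
    rw [show (1 : ℝ) - (c m) ^ 2 * β ^ 2 / (lam m) ^ 2
        = ((lam m) ^ 2 - (c m) ^ 2 * β ^ 2) / (lam m) ^ 2 by field_simp,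
      Real.sqrt_div (by nlinarith), Real.sqrt_sq hl.le]
  have hq : Tendsto (fun m => lam m / a m) atTop (nhds 1) := by
    have := hr.inv₀ one_ne_zero
    simp only [inv_div, inv_one] at this
    exact this
  have hs : Tendsto (fun m => (c m) ^ 2 / lam m * β ^ 2 / (1 + a m / lam m)) atTop
      (nhds (ϱ * β ^ 2 / 2)) := by
    have hden : Tendsto (fun m => 1 + a m / lam m) atTop (nhds ((1:ℝ) + 1)) :=
      tendsto_const_nhds.add hr
    have h2 := (hKac.mul_const (β ^ 2)).div hden (by norm_num : (1:ℝ) + 1 ≠ 0)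
    norm_num at h2
    exact h2
  have heq : (fun m => (1 + lam m / a m) / 2 *
        Real.exp (-((c m) ^ 2 / lam m * β ^ 2 / (1 + a m / lam m) * t))
      + (1 - lam m / a m) / 2 * Real.exp (-((lam m + a m) * t)))
      =ᶠ[atTop] (fun m => Real.exp (-(lam m) * t) * Htilde (lam m) (c m) β t) := by
    filter_upwards [hE] with m hm
    have hl := hlam_pos m
    have hcc := hc_pos m
    have hapos : 0 < a m := Real.sqrt_pos.mpr (by nlinarith)
    have ha2 : (a m) ^ 2 = (lam m) ^ 2 - (c m) ^ 2 * β ^ 2 :=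
      Real.sq_sqrt (by nlinarith)
    have hbr : |β| < lam m / c m := by
      rw [lt_div_iff₀ hcc]
      refine lt_of_pow_lt_pow_left₀ 2 hl.le ?_
      rw [mul_pow, sq_abs]
      nlinarith
    have haa : Real.sqrt ((lam m) ^ 2 - (c m) ^ 2 * β ^ 2) = a m := rfl
    have hsm : (c m) ^ 2 / lam m * β ^ 2 / (1 + a m / lam m) = lam m - a m := by
      have h1 : (0:ℝ) < 1 + a m / lam m := by positivity
      field_simp
      nlinarith [ha2]
    rw [Htilde, if_pos hbr, haa, hsm, Real.cosh_eq, Real.sinh_eq,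
      show -((lam m - a m) * t) = -(lam m) * t + t * a m by ring, Real.exp_add,
      show -((lam m + a m) * t) = -(lam m) * t + -(t * a m) by ring, Real.exp_add,
      Real.exp_neg (t * a m)]
    have hepos : (0:ℝ) < Real.exp (t * a m) := Real.exp_pos _
    field_simp
    ring
  have hterm1 : Tendsto (fun m => (1 + lam m / a m) / 2 *
      Real.exp (-((c m) ^ 2 / lam m * β ^ 2 / (1 + a m / lam m) * t))) atTop
      (nhds (Real.exp (-(ϱ * β ^ 2 * t / 2)))) := by
    have h1 : Tendsto (fun m => (1 + lam m / a m) / 2) atTop (nhds ((1 + 1) / 2)) :=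
      (tendsto_const_nhds.add hq).div_const 2
    have h2 : Tendsto (fun m =>
        Real.exp (-((c m) ^ 2 / lam m * β ^ 2 / (1 + a m / lam m) * t))) atTop
        (nhds (Real.exp (-(ϱ * β ^ 2 / 2 * t)))) :=
      (Real.continuous_exp.tendsto _).comp (hs.mul_const t).neg
    have := h1.mul h2
    norm_num at this
    convert this using 2
    ring
  have hterm2 : Tendsto (fun m => (1 - lam m / a m) / 2 *
      Real.exp (-((lam m + a m) * t))) atTop (nhds 0) := by
    have hb : ∀ᶠ m in atTop, ‖(1 - lam m / a m) / 2 * Real.exp (-((lam m + a m) * t))‖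
        ≤ |(1 - lam m / a m) / 2| := by
      filter_upwards [hE] with m hm
      have hapos : 0 ≤ a m := Real.sqrt_nonneg _
      have hexp : Real.exp (-((lam m + a m) * t)) ≤ 1 := by
        rw [Real.exp_le_one_iff]
        have : 0 ≤ (lam m + a m) * t :=
          mul_nonneg (add_nonneg (hlam_pos m).le hapos) ht
        linarith
      rw [Real.norm_eq_abs, abs_mul, abs_of_pos (Real.exp_pos _)]
      calc |(1 - lam m / a m) / 2| * Real.exp (-((lam m + a m) * t))
          ≤ |(1 - lam m / a m) / 2| * 1 := by
            exact mul_le_mul_of_nonneg_left hexp (abs_nonneg _)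
        _ = |(1 - lam m / a m) / 2| := mul_one _
    have hg : Tendsto (fun m => |(1 - lam m / a m) / 2|) atTop (nhds 0) := by
      have : Tendsto (fun m => (1 - lam m / a m) / 2) atTop (nhds ((1 - 1) / 2)) :=
        (tendsto_const_nhds.sub hq).div_const 2
      have h := this.abs
      norm_num at h
      exact h
    exact squeeze_zero_norm' hb hg
  have hmain := hterm1.add hterm2
  rw [add_zero] at hmain
  exact hmain.congr' heq
end

section
/- (Theorem 3, characteristic-function form.) Fix n ≥ 1, non-zero reals a₁, …, aₙ, start points x₁⁰, …, xₙ⁰ ∈ ℝ, and constants ϱ₁, …, ϱₙ > 0. For each k let (λₖ⁽ᵐ⁾) and (cₖ⁽ᵐ⁾) be sequences of positive reals satisfying Kac's scaling condition with constant ϱₖ. Then for every α ∈ ℝ and every t ≥ 0 the characteristic function of the linear form L(t) = Σₖ aₖXₖ(t) of the n independent telegraph processes, namely exp(iα·Σₖ aₖxₖ⁰)·exp(−(Σₖ λₖ⁽ᵐ⁾)t)·Πₖ H̃(λₖ⁽ᵐ⁾, cₖ⁽ᵐ⁾, aₖα, t) (a complex number), converges as m → ∞ to exp(iα·Σₖ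 aₖxₖ⁰ − (1/2)(Σₖ ϱₖaₖ²)·α²t), the characteristic function of a homogeneous Wiener process with expectation Σₖ aₖxₖ⁰ and diffusion coefficient Σₖ ϱₖaₖ². -/
open Filter

lemma key (ξ t ϱ : ℝ) (ht : 0 ≤ t) (hϱ : 0 < ϱ)
    (lam c : ℕ → ℝ) (hlam_pos : ∀ m, 0 < lam m) (hc_pos : ∀ m, 0 < c m)
    (hlam : Tendsto lam atTop atTop)
    (hKac : Tendsto (fun m => (c m) ^ 2 / lam m) atTop (nhds ϱ)) :
    Tendsto (fun m => Real.exp (-(lam m * t)) * Htilde (lam m) (c m) ξ t) atTop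
      (nhds (Real.exp (-(ϱ * ξ ^ 2 * t / 2)))) := by
  set r : ℕ → ℝ := fun m => (c m) ^ 2 * ξ ^ 2 / (lam m) ^ 2 with hr
  set s : ℕ → ℝ := fun m => Real.sqrt ((lam m) ^ 2 - (c m) ^ 2 * ξ ^ 2) with hs
  have hr0 : Tendsto r atTop (nhds 0) := by
    have h1 : Tendsto (fun m => ((c m) ^ 2 / lam m) * ξ ^ 2 * (lam m)⁻¹) atTop
        (nhds (ϱ * ξ ^ 2 * 0)) :=
      (hKac.mul_const _).mul hlam.inv_tendsto_atTop
    rw [mul_zero] at h1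
    refine h1.congr fun m => ?_
    have hl := (hlam_pos m).ne'
    rw [hr]
    simp only
    field_simp
  have hev : ∀ᶠ m in atTop, r m < 1 / 2 :=
    hr0.eventually_lt_const (by norm_num)
  have hDpos : ∀ m, r m < 1 / 2 → 0 < (lam m) ^ 2 - (c m) ^ 2 * ξ ^ 2 := by
    intro m hm
    have hl2 : 0 < (lam m) ^ 2 := pow_pos (hlam_pos m) 2
    have h2 : (c m) ^ 2 * ξ ^ 2 < (lam m) ^ 2 / 2 := by
      rw [hr] at hm
      simp only at hm
      have := (div_lt_iff₀ hl2).mp hm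
      linarith
    linarith
  have hspos : ∀ m, r m < 1 / 2 → 0 < s m := fun m hm =>
    Real.sqrt_pos.mpr (hDpos m hm)
  have hs2 : ∀ m, r m < 1 / 2 → (s m) ^ 2 = (lam m) ^ 2 - (c m) ^ 2 * ξ ^ 2 :=
    fun m hm => Real.sq_sqrt (hDpos m hm).le
  have hseq : ∀ m, r m < 1 / 2 → s m = lam m * Real.sqrt (1 - r m) := by
    intro m hm
    have hl := hlam_pos m
    have heq : (lam m) ^ 2 - (c m) ^ 2 * ξ ^ 2 = (lam m) ^ 2 * (1 - r m) := by
      rw [hr]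
      field_simp
    rw [hs]
    simp only
    rw [heq, Real.sqrt_mul (sq_nonneg _), Real.sqrt_sq hl.le]
  have hratio : Tendsto (fun m => s m / lam m) atTop (nhds 1) := by
    have h1 : Tendsto (fun m => Real.sqrt (1 - r m)) atTop (nhds 1) := by
      have := (Real.continuous_sqrt.tendsto (1 - 0)).comp (tendsto_const_nhds.sub hr0)
      simp only [sub_zero, Real.sqrt_one] at this
      exact this
    refine h1.congr' ?_
    filter_upwards [hev] with m hm
    rw [hseq m hm, mul_comm, mul_div_assoc, div_self (hlam_pos m).ne', mul_one]
  have hdiff : Tendsto (fun m => lam m - s m) atTop (nhds (ϱ * ξ ^ 2 / 2)) := by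
    have h1 : Tendsto (fun m => ((c m) ^ 2 / lam m) * ξ ^ 2 / (1 + s m / lam m)) atTop
        (nhds (ϱ * ξ ^ 2 / (1 + 1))) :=
      (hKac.mul_const _).div (tendsto_const_nhds.add hratio) (by norm_num)
    have h2 : ϱ * ξ ^ 2 / (1 + 1) = ϱ * ξ ^ 2 / 2 := by norm_num
    rw [h2] at h1
    refine h1.congr' ?_
    filter_upwards [hev] with m hm
    have hl := hlam_pos m
    have hsp := hspos m hm
    have hls : 0 < lam m + s m := by linarith
    have hkey : lam m - s m = (c m) ^ 2 * ξ ^ 2 / (lam m + s m) := by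
      rw [eq_div_iff hls.ne']
      linear_combination -(hs2 m hm)
    have h3 : ((c m) ^ 2 / lam m) * ξ ^ 2 / (1 + s m / lam m)
        = (c m) ^ 2 * ξ ^ 2 / (lam m + s m) := by
      rw [div_eq_div_iff (by positivity) hls.ne']
      field_simp
      try ring
    rw [h3]
    exact hkey.symm
  have hlsr : Tendsto (fun m => lam m / s m) atTop (nhds 1) := by
    have := hratio.inv₀ one_ne_zero
    simp only [inv_div, inv_one] at this
    exact this
  -- the two-term decomposition
  have hdecomp : ∀ᶠ m in atTop,
      (1 + lam m / s m) / 2 * Real.exp (-((lam m - s m) * t))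
        + (1 - lam m / s m) / 2 * Real.exp (-((lam m + s m) * t))
      = Real.exp (-(lam m * t)) * Htilde (lam m) (c m) ξ t := by
    filter_upwards [hev] with m hm
    have hDp := hDpos m hm
    have hsp := hspos m hm
    have hξ : |ξ| < lam m / c m := by
      rw [lt_div_iff₀ (hc_pos m)]
      nlinarith [sq_abs ξ, abs_nonneg ξ, hlam_pos m, hc_pos m]
    rw [Htilde, if_pos hξ]
    rw [show Real.sqrt (lam m ^ 2 - c m ^ 2 * ξ ^ 2) = s m from rfl]
    rw [Real.cosh_eq, Real.sinh_eq]
    have hE1 : Real.exp (-((lam m - s m) * t))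
        = Real.exp (-(lam m * t)) * Real.exp (t * s m) := by
      rw [← Real.exp_add]; ring_nf
    have hE2 : Real.exp (-((lam m + s m) * t))
        = Real.exp (-(lam m * t)) * Real.exp (-(t * s m)) := by
      rw [← Real.exp_add]; ring_nf
    rw [hE1, hE2]
    field_simp
    ring
  have T1 : Tendsto (fun m => (1 + lam m / s m) / 2 * Real.exp (-((lam m - s m) * t)))
      atTop (nhds (Real.exp (-(ϱ * ξ ^ 2 * t / 2)))) := by
    have hexp : Tendsto (fun m => Real.exp (-((lam m - s m) * t))) atTop
        (nhds (Real.exp (-(ϱ * ξ ^ 2 / 2 * t)))) :=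
      (Real.continuous_exp.tendsto _).comp ((hdiff.mul_const t).neg)
    have hconst : Tendsto (fun _ : ℕ => (1 : ℝ)) atTop (nhds 1) := tendsto_const_nhds
    have := ((hconst.add hlsr).div_const 2).mul hexp
    have h2 : (1 + 1) / 2 * Real.exp (-(ϱ * ξ ^ 2 / 2 * t)) = Real.exp (-(ϱ * ξ ^ 2 * t / 2)) := by
      norm_num; ring_nf
    rw [h2] at this
    exact this
  have T2 : Tendsto (fun m => (1 - lam m / s m) / 2 * Real.exp (-((lam m + s m) * t)))
      atTop (nhds 0) := by
    have hg : Tendsto (fun m => |(1 - lam m / s m) / 2|) atTop (nhds 0) := by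
      have hconst : Tendsto (fun _ : ℕ => (1 : ℝ)) atTop (nhds 1) := tendsto_const_nhds
      have := ((hconst.sub hlsr).div_const 2).abs
      simpa using this
    refine squeeze_zero_norm' ?_ hg
    filter_upwards [hev] with m hm
    have hsp := hspos m hm
    have hl := hlam_pos m
    have hle : Real.exp (-((lam m + s m) * t)) ≤ 1 := by
      rw [Real.exp_le_one_iff]
      have : 0 ≤ (lam m + s m) * t := by positivity
      linarith
    rw [Real.norm_eq_abs, abs_mul]
    calc |(1 - lam m / s m) / 2| * |Real.exp (-((lam m + s m) * t))|
        ≤ |(1 - lam m / s m) / 2| * 1 := by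
          apply mul_le_mul_of_nonneg_left _ (abs_nonneg _)
          rw [abs_of_pos (Real.exp_pos _)]
          exact hle
      _ = |(1 - lam m / s m) / 2| := mul_one _
  have := (T1.add T2).congr' hdecomp
  simpa using this

/-- Theorem 3 of the paper in characteristic-function form: under Kac's scaling conditions
(for each `k`: `λₖ⁽ᵐ⁾ → +∞`, `cₖ⁽ᵐ⁾ → +∞`, `(cₖ⁽ᵐ⁾)²/λₖ⁽ᵐ⁾ → ϱₖ > 0`), the characteristic
function of the linear form `L(t) = Σₖ aₖXₖ(t)` of `n` independent telegraph processes
converges, for every `α ∈ ℝ` and `t ≥ 0`, to the characteristic function of a homogeneous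
Wiener process with expectation `Σₖ aₖxₖ⁰` and diffusion coefficient `Σₖ ϱₖaₖ²`. -/
theorem stmt_17 (n : ℕ) (hn : 1 ≤ n) (a x0 ϱ : Fin n → ℝ)
    (ha : ∀ k, a k ≠ 0) (hϱ : ∀ k, 0 < ϱ k)
    (lam c : Fin n → ℕ → ℝ)
    (hlam_pos : ∀ k m, 0 < lam k m) (hc_pos : ∀ k m, 0 < c k m)
    (hlam : ∀ k, Tendsto (lam k) atTop atTop) (hc : ∀ k, Tendsto (c k) atTop atTop)
    (hKac : ∀ k, Tendsto (fun m => (c k m) ^ 2 / lam k m) atTop (nhds (ϱ k)))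
    (α t : ℝ) (ht : 0 ≤ t) :
    Tendsto (fun m =>
        Complex.exp (Complex.I * (α : ℂ) * ((∑ k, a k * x0 k : ℝ) : ℂ)) *
          Complex.exp (-((∑ k, lam k m : ℝ) : ℂ) * (t : ℂ)) *
          ∏ k, ((Htilde (lam k m) (c k m) (a k * α) t : ℝ) : ℂ)) atTop
      (nhds (Complex.exp (Complex.I * (α : ℂ) * ((∑ k, a k * x0 k : ℝ) : ℂ) -
        ((1 / 2 : ℝ) : ℂ) * ((∑ k, ϱ k * (a k) ^ 2 : ℝ) : ℂ) * (α : ℂ) ^ 2 * (t : ℂ)))) := by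
  have hprod : Tendsto
      (fun m => ∏ k, (Real.exp (-(lam k m * t)) * Htilde (lam k m) (c k m) (a k * α) t))
      atTop (nhds (∏ k, Real.exp (-(ϱ k * (a k * α) ^ 2 * t / 2)))) :=
    tendsto_finset_prod _ fun k _ => key (a k * α) t (ϱ k) ht (hϱ k) (lam k) (c k)
      (hlam_pos k) (hc_pos k) (hlam k) (hKac k)
  set C : ℂ := Complex.exp (Complex.I * (α : ℂ) * ((∑ k, a k * x0 k : ℝ) : ℂ)) with hC
  have hcont := ((Complex.continuous_ofReal.tendsto _).comp hprod).const_mul C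
  have hfun : ∀ m,
      C * ((∏ k, (Real.exp (-(lam k m * t)) * Htilde (lam k m) (c k m) (a k * α) t) : ℝ) : ℂ)
      = C * Complex.exp (-((∑ k, lam k m : ℝ) : ℂ) * (t : ℂ)) *
          ∏ k, ((Htilde (lam k m) (c k m) (a k * α) t : ℝ) : ℂ) := by
    intro m
    rw [Finset.prod_mul_distrib, ← Real.exp_sum, mul_assoc]
    push_cast
    congr 2
    congr 1
    rw [Finset.sum_neg_distrib, ← Finset.sum_mul, neg_mul]
  have hlim : Complex.exp (Complex.I * (α : ℂ) * ((∑ k, a k * x0 k : ℝ) : ℂ) -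
        ((1 / 2 : ℝ) : ℂ) * ((∑ k, ϱ k * (a k) ^ 2 : ℝ) : ℂ) * (α : ℂ) ^ 2 * (t : ℂ))
      = C * ((∏ k, Real.exp (-(ϱ k * (a k * α) ^ 2 * t / 2)) : ℝ) : ℂ) := by
    have hsum : (∑ k, -(ϱ k * (a k * α) ^ 2 * t / 2))
        = -(1 / 2 * (∑ k, ϱ k * (a k) ^ 2) * α ^ 2 * t) := by
      rw [Finset.sum_neg_distrib]
      congr 1
      rw [Finset.mul_sum, Finset.sum_mul, Finset.sum_mul]
      refine Finset.sum_congr rfl fun k _ => ?_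
      ring
    rw [← Real.exp_sum, hsum, hC, Complex.ofReal_exp, ← Complex.exp_add]
    congr 1
    push_cast
    ring
  rw [hlim]
  refine hcont.congr fun m => ?_
  simp only [Function.comp_apply]
  exact hfun m
end
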